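/- arXiv:1402.0562 — 2 statements merged into one kernel-verified Lean document; each statement's English description precedes it below -/
import Mathlib

section
/- For every episode k with 1 ≤ k ≤ K and every integer t ≥ 1, the residual ε_t^k satisfies |ε_t^k| ≤ 2Γ + 1 almost surely, and E[ε_t^k | F_{t−1}] = 0 almost surely; that is, (ε_t^k) is a bounded martingale difference sequence. -/
open MeasureTheory Finset

lemma hct_sm_finset_sum {Ω : Type*} {m : MeasurableSpace Ω} (r : ℕ → Ω → ℝ) (I : Finset ℕ)
    (h : ∀ i ∈ I, StronglyMeasurable[m] (r i)) :
    StronglyMeasurable[m] (fun ω => ∑ i ∈ I, r i ω) := by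
  classical
  induction I using Finset.induction with
  | empty => simpa using stronglyMeasurable_const
  | @insert a s ha ih =>
      simp only [Finset.sum_insert ha]
      exact (h a (Finset.mem_insert_self a s)).add
        (ih fun i hi => h i (Finset.mem_insert_of_mem hi))

/-- Lemma `martingale.residual`.
With rewards `r` adapted to a filtration `F`, taking values in `[0,1]`, satisfying the
`Γ`-mixing property with mean `f`, episodes `k = 1, …, K` starting at `tk k` of length
`L k ≥ 1`, disjoint and ordered, `M k t = E[∑_{t'=tk k}^{tk k + L k − 1} r_{t'} | F t]`
and `ε k t = M k t − M k (t−1)`: for every episode `1 ≤ k ≤ K` and every `t ≥ 1`,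
`|ε k t| ≤ 2Γ + 1` a.s. and `E[ε k t | F (t−1)] = 0` a.s. -/
theorem hct_residual_bounded_mds
    {Ω : Type*} {m0 : MeasurableSpace Ω} (μ : Measure Ω) [IsProbabilityMeasure μ]
    (F : Filtration ℕ m0) (r : ℕ → Ω → ℝ)
    (hr_adapted : Adapted F r)
    (hr_bdd : ∀ t ω, r t ω ∈ Set.Icc (0 : ℝ) 1)
    (f Γ : ℝ) (hΓ : 0 ≤ Γ)
    (hmix : ∀ s S : ℕ, 1 ≤ s → s ≤ S →
      ∀ᵐ ω ∂μ,
        |(μ[(fun ω' => ∑ t' ∈ Finset.Icc s S, (r t' ω' - f)) | F (s - 1)]) ω| ≤ Γ)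
    (K : ℕ) (tk L : ℕ → ℕ)
    (htk : ∀ k, 1 ≤ tk k) (hL : ∀ k, 1 ≤ L k)
    (hsep : ∀ k, tk k + L k ≤ tk (k + 1))
    (M : ℕ → ℕ → Ω → ℝ)
    (hM : ∀ k t, M k t =
      μ[(fun ω' => ∑ t' ∈ Finset.Ico (tk k) (tk k + L k), r t' ω') | F t])
    (ε : ℕ → ℕ → Ω → ℝ)
    (hε : ∀ k t, ε k t = M k t - M k (t - 1)) :
    ∀ k, 1 ≤ k → k ≤ K → ∀ t, 1 ≤ t →
      (∀ᵐ ω ∂μ, |ε k t ω| ≤ 2 * Γ + 1) ∧ (μ[ε k t | F (t - 1)] =ᵐ[μ] 0) := by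
  -- basic integrability facts
  have hrm : ∀ s, StronglyMeasurable (r s) := fun s => (hr_adapted s).stronglyMeasurable.mono (F.le s)
  have hrInt : ∀ s, Integrable (r s) μ := by
    intro s
    refine Integrable.mono' (integrable_const (1 : ℝ)) (hrm s).aestronglyMeasurable ?_
    refine ae_of_all _ fun ω => ?_
    have h := hr_bdd s ω
    rw [Real.norm_eq_abs, abs_le]
    exact ⟨by linarith [h.1], h.2⟩
  have hsumInt : ∀ I : Finset ℕ, Integrable (fun ω => ∑ t' ∈ I, r t' ω) μ :=
    fun I => integrable_finset_sum I fun i _ => hrInt i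
  have hsm : ∀ (j : ℕ) (I : Finset ℕ), (∀ i ∈ I, i ≤ j) →
      StronglyMeasurable[F j] (fun ω => ∑ i ∈ I, r i ω) := by
    intro j I hI
    exact hct_sm_finset_sum r I fun i hi => (hr_adapted i).stronglyMeasurable.mono (F.mono (hI i hi))
  -- the tail bound at time `s - 1`
  have tail : ∀ s c : ℕ, 1 ≤ s → ∀ᵐ ω ∂μ,
      |(μ[(fun ω' => ∑ t' ∈ Ico s c, r t' ω') | F (s - 1)]) ω
        - f * ((Ico s c).card : ℕ)| ≤ Γ := by
    intro s c hs
    rcases le_or_gt c s with hcs | hsc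
    · have hemp : Ico s c = ∅ := Ico_eq_empty (not_lt.2 hcs)
      simp only [hemp, card_empty, sum_empty, Nat.cast_zero, mul_zero, sub_zero]
      rw [show (fun _ : Ω => (0 : ℝ)) = (0 : Ω → ℝ) from rfl, condExp_zero]
      exact ae_of_all _ fun ω => by simpa using hΓ
    · have h1 : s ≤ c - 1 := by omega
      have hIcc : Finset.Icc s (c - 1) = Finset.Ico s c := by
        rw [← Finset.Ico_add_one_right_eq_Icc]
        congr 1
        omega
      have hx := hmix s (c - 1) hs h1
      rw [hIcc] at hx
      have hfun : (fun ω' => ∑ t' ∈ Ico s c, (r t' ω' - f)) =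
          (fun ω' => ∑ t' ∈ Ico s c, r t' ω') - (fun _ => f * ((Ico s c).card : ℕ)) := by
        funext ω'
        simp [Finset.sum_sub_distrib, mul_comm]
      rw [hfun] at hx
      have hsub := condExp_sub (μ := μ) (m := F (s - 1)) (hsumInt (Ico s c))
        (integrable_const (f * ((Ico s c).card : ℕ)))
      have hc := condExp_const (μ := μ) (F.le (s - 1)) (f * ((Ico s c).card : ℕ))
      filter_upwards [hx, hsub] with ω hx1 hx2
      rw [hx2] at hx1
      simp only [Pi.sub_apply] at hx1
      rw [hc] at hx1
      exact hx1
  -- push the bound down to earlier σ-algebras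
  have pushdown : ∀ (g : Ω → ℝ) (c : ℝ) (i j : ℕ), i ≤ j →
      (∀ᵐ ω ∂μ, |(μ[g | F j]) ω - c| ≤ Γ) → ∀ᵐ ω ∂μ, |(μ[g | F i]) ω - c| ≤ Γ := by
    intro g c i j hij hbb
    have hcc : μ[g | F i] =ᵐ[μ] μ[μ[g | F j] | F i] :=
      (condExp_condExp_of_le (F.mono hij) (F.le j)).symm
    have hup : μ[μ[g | F j] | F i] ≤ᵐ[μ] μ[(fun _ => c + Γ) | F i] := by
      refine condExp_mono integrable_condExp (integrable_const _) ?_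
      filter_upwards [hbb] with ω h
      exact by have := (abs_le.1 h).2; simpa using by linarith
    have hlo : μ[(fun _ => c - Γ) | F i] ≤ᵐ[μ] μ[μ[g | F j] | F i] := by
      refine condExp_mono (integrable_const _) integrable_condExp ?_
      filter_upwards [hbb] with ω h
      exact by have := (abs_le.1 h).1; simpa using by linarith
    rw [condExp_const (F.le i)] at hup hlo
    filter_upwards [hcc, hup, hlo] with ω h0 h1 h2
    rw [h0, abs_le]
    exact ⟨by simpa using by linarith [h2], by simpa using by linarith [h1]⟩
  have tailb : ∀ s c i : ℕ, 1 ≤ s → i + 1 ≤ s → ∀ᵐ ω ∂μ,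
      |(μ[(fun ω' => ∑ t' ∈ Ico s c, r t' ω') | F i]) ω
        - f * ((Ico s c).card : ℕ)| ≤ Γ := by
    intro s c i hs hi
    exact pushdown _ _ i (s - 1) (by omega) (tail s c hs)
  -- `f ∈ [0, 1]`
  have hfb : ∀ N : ℕ, -Γ ≤ f * N ∧ f * N ≤ N + Γ := by
    intro N
    have h1 := tail 1 (N + 1) le_rfl
    have hcard : (Ico 1 (N + 1)).card = N := by simp
    rw [hcard] at h1
    have h2 : (0 : Ω → ℝ) ≤ᵐ[μ] μ[(fun ω' => ∑ t' ∈ Ico 1 (N + 1), r t' ω') | F 0] :=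
      condExp_nonneg (ae_of_all _ fun ω =>
        Finset.sum_nonneg fun i _ => (hr_bdd i ω).1)
    have h3 : μ[(fun ω' => ∑ t' ∈ Ico 1 (N + 1), r t' ω') | F 0] ≤ᵐ[μ]
        μ[(fun _ => (N : ℝ)) | F 0] := by
      refine condExp_mono (hsumInt _) (integrable_const _) (ae_of_all _ fun ω => ?_)
      calc ∑ t' ∈ Ico 1 (N + 1), r t' ω
          ≤ (Ico 1 (N + 1)).card • (1 : ℝ) :=
            Finset.sum_le_card_nsmul _ _ _ fun i _ => (hr_bdd i ω).2
        _ = N := by simp [hcard]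
    rw [condExp_const (F.le 0)] at h3
    haveI : (ae μ).NeBot := ae_neBot.2 (IsProbabilityMeasure.ne_zero μ)
    obtain ⟨ω, hb, h0, hN⟩ := (h1.and (h2.and h3)).exists
    simp only [Pi.zero_apply] at h0
    rw [abs_le] at hb
    exact ⟨by linarith [hb.1, hb.2], by linarith [hb.1, hb.2]⟩
  have hf0 : 0 ≤ f := by
    by_contra h
    push_neg at h
    obtain ⟨N, hN⟩ := exists_nat_gt (Γ / (-f))
    have h1 := (hfb N).1
    rw [div_lt_iff₀ (by linarith : (0 : ℝ) < -f)] at hN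
    nlinarith
  have hf1 : f ≤ 1 := by
    by_contra h
    push_neg at h
    obtain ⟨N, hN⟩ := exists_nat_gt (Γ / (f - 1))
    have h1 := (hfb N).2
    rw [div_lt_iff₀ (by linarith : (0 : ℝ) < f - 1)] at hN
    nlinarith
  -- main proof
  intro k _ _ t ht
  set a := tk k with ha_def
  set b := tk k + L k with hb_def
  have ha1 : 1 ≤ a := htk k
  have hab : a < b := by have := hL k; omega
  constructor
  · -- boundedness
    rcases le_or_gt b t with hbt | htb
    · -- the episode is entirely in the past
      have hXm : StronglyMeasurable[F (t - 1)]
          (fun ω' => ∑ t' ∈ Finset.Ico a b, r t' ω') := by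
        refine hsm (t - 1) _ fun i hi => ?_
        have := (Finset.mem_Ico.1 hi).2
        omega
      have h1 : M k t = fun ω' => ∑ t' ∈ Finset.Ico a b, r t' ω' := by
        rw [hM k t]
        exact condExp_of_stronglyMeasurable (F.le t)
          (hXm.mono (F.mono (Nat.sub_le t 1))) (hsumInt _)
      have h2 : M k (t - 1) = fun ω' => ∑ t' ∈ Finset.Ico a b, r t' ω' := by
        rw [hM k (t - 1)]
        exact condExp_of_stronglyMeasurable (F.le (t - 1)) hXm (hsumInt _)
      refine ae_of_all _ fun ω => ?_
      rw [hε]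
      simp only [Pi.sub_apply, h1, h2, sub_self, abs_zero]
      linarith
    · -- the episode extends into the future
      set m := max a t with hm_def
      have ham : a ≤ m := le_max_left _ _
      have htm : t ≤ m := le_max_right _ _
      have hmb : m < b := max_lt hab htb
      have hm1 : 1 ≤ m := le_trans ha1 ham
      have hPm : StronglyMeasurable[F (t - 1)] (fun ω => ∑ t' ∈ Ico a m, r t' ω) := by
        refine hsm (t - 1) _ fun i hi => ?_
        rcases Finset.mem_Ico.1 hi with ⟨hi1, hi2⟩
        rcases lt_max_iff.1 hi2 with h | h
        · omega
        · omega
      have hsplit : (fun ω' => ∑ t' ∈ Finset.Ico a b, r t' ω') =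
          (fun ω => ∑ t' ∈ Ico a m, r t' ω) + (fun ω => ∑ t' ∈ Ico m b, r t' ω) := by
        funext ω
        simp only [Pi.add_apply]
        exact (Finset.sum_Ico_consecutive _ ham hmb.le).symm
      have hMt : M k t =ᵐ[μ] (fun ω => ∑ t' ∈ Ico a m, r t' ω) +
          μ[(fun ω => ∑ t' ∈ Ico m b, r t' ω) | F t] := by
        rw [hM k t, hsplit]
        refine (condExp_add (m := F t) (hsumInt _) (hsumInt _)).trans ?_
        rw [condExp_of_stronglyMeasurable (F.le t)
          (hPm.mono (F.mono (Nat.sub_le t 1))) (hsumInt _)]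
      have hMt' : M k (t - 1) =ᵐ[μ] (fun ω => ∑ t' ∈ Ico a m, r t' ω) +
          μ[(fun ω => ∑ t' ∈ Ico m b, r t' ω) | F (t - 1)] := by
        rw [hM k (t - 1), hsplit]
        refine (condExp_add (m := F (t - 1)) (hsumInt _) (hsumInt _)).trans ?_
        rw [condExp_of_stronglyMeasurable (F.le (t - 1)) hPm (hsumInt _)]
      have hεeq : ∀ᵐ ω ∂μ, ε k t ω =
          (μ[(fun ω => ∑ t' ∈ Ico m b, r t' ω) | F t]) ω -
          (μ[(fun ω => ∑ t' ∈ Ico m b, r t' ω) | F (t - 1)]) ω := by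
        filter_upwards [hMt, hMt'] with ω e1 e2
        rw [hε]
        simp only [Pi.sub_apply, e1, e2, Pi.add_apply]
        ring
      have hB := tailb m b (t - 1) hm1 (by omega)
      rcases lt_or_ge t a with hta | hat
      · -- before the episode starts
        have hma : m = a := max_eq_left hta.le
        have hA := tailb m b t hm1 (by omega)
        filter_upwards [hεeq, hA, hB] with ω e0 e1 e2
        rw [abs_le] at e1 e2 ⊢
        rw [e0]
        exact ⟨by linarith [e1.1, e2.2], by linarith [e1.2, e2.1]⟩
      · -- inside the episode
        have hma : m = t := max_eq_right hat
        have hQsplit : (fun ω => ∑ t' ∈ Ico m b, r t' ω) =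
            r t + (fun ω => ∑ t' ∈ Ico (t + 1) b, r t' ω) := by
          funext ω
          simp only [Pi.add_apply]
          rw [hma]
          exact Finset.sum_eq_sum_Ico_succ_bot htb _
        have hQt : μ[(fun ω => ∑ t' ∈ Ico m b, r t' ω) | F t] =ᵐ[μ]
            r t + μ[(fun ω => ∑ t' ∈ Ico (t + 1) b, r t' ω) | F t] := by
          rw [hQsplit]
          refine (condExp_add (m := F t) (hrInt t) (hsumInt _)).trans ?_
          rw [condExp_of_stronglyMeasurable (F.le t) (hr_adapted t).stronglyMeasurable (hrInt t)]
        have hA := tailb (t + 1) b t (by omega) le_rfl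
        have hcard : ((Ico m b).card : ℝ) = ((Ico (t + 1) b).card : ℝ) + 1 := by
          rw [hma]
          rw [Nat.card_Ico, Nat.card_Ico]
          have : b - t = (b - (t + 1)) + 1 := by omega
          rw [this]
          push_cast
          ring
        filter_upwards [hεeq, hQt, hA, hB] with ω e0 e1 e2 e3
        rw [abs_le] at e2 e3 ⊢
        rw [e0, e1]
        simp only [Pi.add_apply]
        have h0 := (hr_bdd t ω).1
        have h1 := (hr_bdd t ω).2
        constructor
        · nlinarith [e2.1, e3.2]
        · nlinarith [e2.2, e3.1]
  · -- martingale difference property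
    have hInt1 : Integrable (M k t) μ := by rw [hM k t]; exact integrable_condExp
    have hInt2 : Integrable (M k (t - 1)) μ := by rw [hM k (t - 1)]; exact integrable_condExp
    have e1 : μ[M k t | F (t - 1)] =ᵐ[μ] M k (t - 1) := by
      rw [hM k t, hM k (t - 1)]
      exact condExp_condExp_of_le (F.mono (Nat.sub_le t 1)) (F.le t)
    have e2 : μ[M k (t - 1) | F (t - 1)] = M k (t - 1) := by
      rw [hM k (t - 1)]
      exact condExp_of_stronglyMeasurable (F.le (t - 1)) stronglyMeasurable_condExp
        integrable_condExp
    have e3 : μ[ε k t | F (t - 1)] =ᵐ[μ] μ[M k t | F (t - 1)] - μ[M k (t - 1) | F (t - 1)] := by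
      rw [hε]
      exact condExp_sub (m := F (t - 1)) hInt1 hInt2
    filter_upwards [e1, e3] with ω h1 h3
    rw [h3]
    simp only [Pi.sub_apply, e2, h1, sub_self, Pi.zero_apply]
end

section
/- (Concentration inequality for non-iid episodic random variables.) For every δ ∈ (0,1), with probability at least 1 − δ, | (1/T) Σ_{k=1}^{K} Σ_{t=t_k}^{t_k+L_k−1} r_t − f | ≤ (2Γ+1) √(2 log(2/δ) / T) + K Γ / T, where T = Σ_{k=1}^K L_k is the total number of samples across all episodes. -/
open MeasureTheory Finset Real ProbabilityTheory


lemma aux_cond_hoeffding {Ω : Type*} {m0 : MeasurableSpace Ω} {μ : Measure Ω}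
    [IsProbabilityMeasure μ] {m : MeasurableSpace Ω} (hm : m ≤ m0)
    {Y : Ω → ℝ} (hYint : Integrable Y μ) {c : ℝ} (hc : 0 ≤ c)
    (hbdd : ∀ᵐ ω ∂μ, |Y ω| ≤ c) (hcond : μ[Y|m] =ᵐ[μ] 0) (l : ℝ) :
    μ[fun ω => exp (l * Y ω)|m] ≤ᵐ[μ] fun _ => exp (l ^ 2 * c ^ 2 / 2) := by
  have hYaesm : AEStronglyMeasurable[m0] Y μ := hYint.1
  have hEaesm : AEStronglyMeasurable[m0] (fun ω => exp (l * Y ω)) μ :=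
    (Real.continuous_exp.comp (continuous_const.mul continuous_id)).comp_aestronglyMeasurable
      hYaesm
  have hEint : Integrable (fun ω => exp (l * Y ω)) μ := by
    refine Integrable.mono' (integrable_const (exp (|l| * c))) hEaesm ?_
    filter_upwards [hbdd] with ω hω
    rw [Real.norm_eq_abs, abs_of_pos (exp_pos _), exp_le_exp]
    calc l * Y ω ≤ |l * Y ω| := le_abs_self _
      _ = |l| * |Y ω| := abs_mul _ _
      _ ≤ |l| * c := by gcongr
  rcases eq_or_lt_of_le hc with hc0 | hcpos
  · -- c = 0 : Y =ᵐ 0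
    have hY0 : Y =ᵐ[μ] fun _ => (0 : ℝ) := by
      filter_upwards [hbdd] with ω hω
      have := hω.trans (le_of_eq hc0.symm)
      simpa [abs_nonpos_iff] using this
    have h1 : (fun ω => exp (l * Y ω)) =ᵐ[μ] fun _ => (1 : ℝ) := by
      filter_upwards [hY0] with ω hω; simp [hω]
    calc μ[fun ω => exp (l * Y ω)|m] =ᵐ[μ] μ[fun _ => (1:ℝ)|m] := condExp_congr_ae h1
      _ = fun _ => (1 : ℝ) := condExp_const hm 1
      _ ≤ᵐ[μ] fun _ => exp (l ^ 2 * c ^ 2 / 2) := by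
          refine Filter.Eventually.of_forall fun ω => ?_
          rw [← Real.exp_zero]
          exact exp_le_exp.2 (by positivity)
  · -- c > 0
    set a : ℝ := (exp (-(l * c)) + exp (l * c)) / 2 with ha
    set b : ℝ := (exp (l * c) - exp (-(l * c))) / (2 * c) with hb
    have hpt : ∀ y : ℝ, |y| ≤ c → exp (l * y) ≤ a + b * y := by
      intro y hy
      rw [abs_le] at hy
      have hθ1 : 0 ≤ (c - y) / (2 * c) := by
        apply div_nonneg (by linarith) (by linarith)
      have hθ2 : 0 ≤ (c + y) / (2 * c) := by
        apply div_nonneg (by linarith) (by linarith)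
      have h2c : (2 * c) ≠ 0 := by positivity
      have hθs : (c - y) / (2 * c) + (c + y) / (2 * c) = 1 := by
        field_simp; ring
      have hconv := convexOn_exp.2 (Set.mem_univ (-(l * c))) (Set.mem_univ (l * c))
        hθ1 hθ2 hθs
      have harg : -((c - y) / (2 * c) * (l * c)) + (c + y) / (2 * c) * (l * c) = l * y := by
        rw [div_mul_eq_mul_div, div_mul_eq_mul_div, ← neg_div, ← add_div, div_eq_iff h2c]; ring
      have key : exp (l * y) ≤
          (c - y) / (2 * c) * exp (-(l * c)) + (c + y) / (2 * c) * exp (l * c) := by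
        simpa [smul_eq_mul, harg] using hconv
      refine key.trans (le_of_eq ?_)
      rw [ha, hb]
      field_simp
      ring
    have haff : μ[fun ω => exp (l * Y ω)|m] ≤ᵐ[μ] μ[fun ω => a + b * Y ω|m] := by
      refine condExp_mono hEint ((integrable_const a).add (hYint.const_mul b)) ?_
      filter_upwards [hbdd] with ω hω
      exact hpt _ hω
    have hsplit : μ[fun ω => a + b * Y ω|m] =ᵐ[μ] fun _ => a := by
      calc μ[fun ω => a + b * Y ω|m]
          =ᵐ[μ] μ[fun _ => a|m] + μ[fun ω => b * Y ω|m] :=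
            condExp_add (integrable_const a) (hYint.const_mul b) m
        _ =ᵐ[μ] (fun _ => a) + fun ω => b * (μ[Y|m]) ω := by
            refine Filter.EventuallyEq.add (Filter.EventuallyEq.of_eq (condExp_const hm a)) ?_
            exact condExp_smul (μ := μ) b Y m
        _ =ᵐ[μ] fun _ => a := by
            filter_upwards [hcond] with ω hω
            simp [hω]
    have hcosh : a ≤ exp (l ^ 2 * c ^ 2 / 2) := by
      have h1 : a = Real.cosh (l * c) := by rw [Real.cosh_eq]; ring
      have h2 := Real.cosh_le_exp_half_sq (l * c)
      rw [h1]
      refine h2.trans (exp_le_exp.2 (le_of_eq ?_))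
      ring
    calc μ[fun ω => exp (l * Y ω)|m] ≤ᵐ[μ] μ[fun ω => a + b * Y ω|m] := haff
      _ =ᵐ[μ] fun _ => a := hsplit
      _ ≤ᵐ[μ] fun _ => exp (l ^ 2 * c ^ 2 / 2) := Filter.Eventually.of_forall fun _ => hcosh

lemma aux_mgf_sum {Ω : Type*} {m0 : MeasurableSpace Ω} {μ : Measure Ω}
    [IsProbabilityMeasure μ] (F : Filtration ℕ m0)
    (D : ℕ → Ω → ℝ) (c : ℕ → ℝ) (hc : ∀ t, 0 ≤ c t)
    (hSM : ∀ t, StronglyMeasurable[F t] (D t))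
    (hbdd : ∀ t, ∀ᵐ ω ∂μ, |D t ω| ≤ c t)
    (hcond : ∀ t, μ[D t|F (t - 1)] =ᵐ[μ] 0) (l : ℝ) :
    ∀ N, ∫ ω, exp (l * ∑ t ∈ Finset.range N, D t ω) ∂μ ≤
      exp (l ^ 2 * (∑ t ∈ Finset.range N, c t ^ 2) / 2) := by
  have hDint : ∀ t, Integrable (D t) μ := fun t =>
    Integrable.mono' (integrable_const (c t))
      ((hSM t).mono (F.le t)).aestronglyMeasurable
      (by filter_upwards [hbdd t] with ω h; rwa [Real.norm_eq_abs])
  intro N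
  induction N with
  | zero => simp
  | succ N ih =>
    set S : Ω → ℝ := fun ω => ∑ t ∈ Finset.range N, D t ω with hS
    have hS_SM : StronglyMeasurable[F (N - 1)] S :=
      Finset.stronglyMeasurable_fun_sum _ fun t ht =>
        (hSM t).mono (F.mono (Nat.le_pred_of_lt (Finset.mem_range.mp ht)))
    have haeS : ∀ᵐ ω ∂μ, |S ω| ≤ ∑ t ∈ Finset.range N, c t := by
      filter_upwards [ae_all_iff.2 hbdd] with ω hω
      exact (Finset.abs_sum_le_sum_abs _ _).trans
        (Finset.sum_le_sum fun t _ => hω t)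
    set G : Ω → ℝ := fun ω => exp (l * S ω) with hG
    set H : Ω → ℝ := fun ω => exp (l * D N ω) with hH
    have hexp : ∀ (u : Ω → ℝ) (b : ℝ), (∀ᵐ ω ∂μ, |u ω| ≤ b) →
        ∀ᵐ ω ∂μ, ‖exp (l * u ω)‖ ≤ exp (|l| * b) := by
      intro u b hu
      filter_upwards [hu] with ω hω
      rw [Real.norm_eq_abs, abs_of_pos (exp_pos _), exp_le_exp]
      calc l * u ω ≤ |l * u ω| := le_abs_self _
        _ = |l| * |u ω| := abs_mul _ _
        _ ≤ |l| * b := by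
            refine mul_le_mul_of_nonneg_left hω (abs_nonneg l)
    have hG_SM : StronglyMeasurable[F (N - 1)] G :=
      (Real.continuous_exp.comp (continuous_const.mul continuous_id)).comp_stronglyMeasurable
        hS_SM
    have hH_SM : StronglyMeasurable[F N] H :=
      (Real.continuous_exp.comp (continuous_const.mul continuous_id)).comp_stronglyMeasurable
        (hSM N)
    have hGint : Integrable G μ :=
      Integrable.mono' (integrable_const (exp (|l| * ∑ t ∈ Finset.range N, c t)))
        (hG_SM.mono (F.le _)).aestronglyMeasurable (hexp S _ haeS)
    have hHint : Integrable H μ :=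
      Integrable.mono' (integrable_const (exp (|l| * c N)))
        (hH_SM.mono (F.le _)).aestronglyMeasurable (hexp (D N) _ (hbdd N))
    have hGH : Integrable (G * H) μ := by
      refine Integrable.mono' (integrable_const
          (exp (|l| * ∑ t ∈ Finset.range N, c t) * exp (|l| * c N)))
        ((hG_SM.mono (F.le _)).mul (hH_SM.mono (F.le _))).aestronglyMeasurable ?_
      filter_upwards [hexp S _ haeS, hexp (D N) _ (hbdd N)] with ω h1 h2
      rw [Pi.mul_apply, Real.norm_eq_abs, abs_mul]
      exact mul_le_mul (by rwa [Real.norm_eq_abs] at h1) (by rwa [Real.norm_eq_abs] at h2)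
        (abs_nonneg _) (exp_pos _).le
    have hmul := condExp_mul_of_stronglyMeasurable_left (μ := μ) hG_SM hGH hHint
    have hhoeff := aux_cond_hoeffding (μ := μ) (F.le (N - 1)) (hDint N) (hc N)
      (hbdd N) (hcond N) l
    calc ∫ ω, exp (l * ∑ t ∈ Finset.range (N + 1), D t ω) ∂μ
        = ∫ ω, (G * H) ω ∂μ := by
          refine integral_congr_ae (Filter.Eventually.of_forall fun ω => ?_)
          simp only [Pi.mul_apply, hG, hH, hS, Finset.sum_range_succ, mul_add, exp_add]
      _ = ∫ ω, (μ[G * H|F (N - 1)]) ω ∂μ := (integral_condExp (F.le (N - 1))).symm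
      _ ≤ ∫ ω, G ω * exp (l ^ 2 * c N ^ 2 / 2) ∂μ := by
          refine integral_mono_ae integrable_condExp (hGint.mul_const _) ?_
          filter_upwards [hmul, hhoeff] with ω h1 h2
          rw [h1, Pi.mul_apply]
          exact mul_le_mul_of_nonneg_left h2 (exp_pos _).le
      _ = (∫ ω, G ω ∂μ) * exp (l ^ 2 * c N ^ 2 / 2) := integral_mul_const _ _
      _ ≤ exp (l ^ 2 * (∑ t ∈ Finset.range N, c t ^ 2) / 2) * exp (l ^ 2 * c N ^ 2 / 2) :=
          mul_le_mul_of_nonneg_right ih (exp_pos _).le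
      _ = exp (l ^ 2 * (∑ t ∈ Finset.range (N + 1), c t ^ 2) / 2) := by
          rw [← exp_add, Finset.sum_range_succ]
          congr 1
          ring

lemma aux_chernoff {Ω : Type*} {m0 : MeasurableSpace Ω} {μ : Measure Ω}
    [IsProbabilityMeasure μ] (X : Ω → ℝ) (v ε : ℝ) (hv : 0 < v) (hε : 0 < ε)
    (hint : ∀ t : ℝ, Integrable (fun ω => exp (t * X ω)) μ)
    (hmgf : ∀ t : ℝ, ∫ ω, exp (t * X ω) ∂μ ≤ exp (t ^ 2 * v / 2)) :
    (μ {ω | ε ≤ X ω}).toReal ≤ exp (-(ε ^ 2) / (2 * v)) ∧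
    (μ {ω | X ω ≤ -ε}).toReal ≤ exp (-(ε ^ 2) / (2 * v)) := by
  have hvne : v ≠ 0 := hv.ne'
  have hbound : ∀ a t : ℝ, exp a * mgf X μ t ≤ exp (a + t ^ 2 * v / 2) := by
    intro a t
    rw [exp_add]
    exact mul_le_mul_of_nonneg_left (hmgf t) (exp_pos _).le
  constructor
  · have h := measure_ge_le_exp_mul_mgf (μ := μ) (X := X) ε
      (le_of_lt (div_pos hε hv)) (hint (ε / v))
    refine h.trans ((hbound _ _).trans (le_of_eq ?_))
    congr 1
    field_simp
    ring
  · have h := measure_le_le_exp_mul_mgf (μ := μ) (X := X) (-ε)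
      (neg_nonpos.mpr (le_of_lt (div_pos hε hv))) (hint (-(ε / v)))
    refine h.trans ((hbound _ _).trans (le_of_eq ?_))
    congr 1
    field_simp
    ring

/-- Lemma `tail.weak.dep`: concentration inequality for non-iid episodic
random variables.
In the episodic setup (rewards adapted, `[0,1]`-valued, `Γ`-mixing with mean `f`;
disjoint ordered episodes `k = 1, …, K` starting at `tk k` with length `L k ≥ 1`;
`T = ∑_{k=1}^K L k` the total number of samples): for every `δ ∈ (0,1)`,
with probability at least `1 − δ`,
`|(1/T) ∑_{k=1}^{K} ∑_{t=tk k}^{tk k + L k − 1} r t − f| ≤ (2Γ+1)√(2 log(2/δ)/T) + KΓ/T`. -/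
theorem hct_episodic_concentration
    {Ω : Type*} {m0 : MeasurableSpace Ω} (μ : Measure Ω) [IsProbabilityMeasure μ]
    (F : Filtration ℕ m0) (r : ℕ → Ω → ℝ)
    (hr_adapted : Adapted F r)
    (hr_bdd : ∀ t ω, r t ω ∈ Set.Icc (0 : ℝ) 1)
    (f Γ : ℝ) (hΓ : 0 ≤ Γ)
    (hmix : ∀ s S : ℕ, 1 ≤ s → s ≤ S →
      ∀ᵐ ω ∂μ,
        |(μ[(fun ω' => ∑ t' ∈ Finset.Icc s S, (r t' ω' - f)) | F (s - 1)]) ω| ≤ Γ)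
    (K : ℕ) (hK : 1 ≤ K) (tk L : ℕ → ℕ)
    (htk : ∀ k, 1 ≤ tk k) (hL : ∀ k, 1 ≤ L k)
    (hsep : ∀ k, tk k + L k ≤ tk (k + 1))
    (T : ℕ) (hT : T = ∑ k ∈ Finset.Icc 1 K, L k) :
    ∀ δ : ℝ, 0 < δ → δ < 1 →
      1 - ENNReal.ofReal δ ≤
        μ {ω | |(1 / (T : ℝ)) * ∑ k ∈ Finset.Icc 1 K,
                  ∑ t ∈ Finset.Ico (tk k) (tk k + L k), r t ω - f|
                ≤ (2 * Γ + 1) * Real.sqrt (2 * Real.log (2 / δ) / T) + K * Γ / T} := by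
  intro δ hδ0 hδ1
  classical
  -- basic positivity
  have hT1 : 1 ≤ T := by
    rw [hT]
    calc 1 ≤ K := hK
      _ = ∑ k ∈ Finset.Icc 1 K, 1 := by simp [Nat.card_Icc]
      _ ≤ ∑ k ∈ Finset.Icc 1 K, L k := Finset.sum_le_sum fun k _ => hL k
  have hTpos : (0 : ℝ) < T := by exact_mod_cast hT1
  set c : ℝ := 2 * Γ + 1 with hc_def
  have hcpos : 0 < c := by simp only [hc_def]; linarith
  -- episode ordering
  have hmono : ∀ k j, k < j → tk k + L k ≤ tk j := by
    intro k j hkj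
    induction j with
    | zero => omega
    | succ j ihj =>
      rcases Nat.lt_succ_iff_lt_or_eq.mp hkj with h | h
      · exact (ihj h).trans ((Nat.le_add_right _ _).trans (hsep j))
      · subst h; exact hsep k
  set ep : ℕ → Finset ℕ := fun k => Finset.Ico (tk k) (tk k + L k) with hep
  have hdisj : ∀ k j, k ≠ j → Disjoint (ep k) (ep j) := by
    have base : ∀ k j, k < j → Disjoint (ep k) (ep j) := by
      intro k j hkj
      refine Finset.disjoint_left.2 fun t htk' htj => ?_
      rw [hep, Finset.mem_Ico] at htk' htj
      have := hmono k j hkj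
      omega
    intro k j hkj
    rcases lt_or_gt_of_ne hkj with h | h
    · exact base k j h
    · exact (base j k h).symm
  set allT : Finset ℕ := (Finset.Icc 1 K).biUnion ep with hallT
  have hcard : allT.card = T := by
    rw [hallT, Finset.card_biUnion fun k _ j _ hkj => hdisj k j hkj, hT]
    refine Finset.sum_congr rfl fun k _ => ?_
    rw [hep, Nat.card_Ico]
    omega
  have huniq : ∀ k, k ∈ Finset.Icc 1 K → ∀ j, j ∈ Finset.Icc 1 K → ∀ t, t ∈ ep k → t ∈ ep j →
      k = j := by
    intro k _ j _ t htk' htj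
    by_contra h
    exact Finset.disjoint_left.1 (hdisj k j h) htk' htj
  set endOf : ℕ → ℕ :=
    fun t => if h : ∃ k, k ∈ Finset.Icc 1 K ∧ t ∈ ep k then tk h.choose + L h.choose else 0
    with hendOf
  have hend : ∀ k ∈ Finset.Icc 1 K, ∀ t ∈ ep k, endOf t = tk k + L k := by
    intro k hk t ht
    have hex : ∃ k', k' ∈ Finset.Icc 1 K ∧ t ∈ ep k' := ⟨k, hk, ht⟩
    rw [hendOf]
    simp only [dif_pos hex]
    obtain ⟨h1, h2⟩ := hex.choose_spec
    rw [huniq _ h1 _ hk _ h2 ht]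
  -- integrability
  have hrint : ∀ t, Integrable (r t) μ := by
    intro t
    refine Integrable.mono' (integrable_const 1)
      ((hr_adapted t).mono (F.le t) le_rfl).aestronglyMeasurable ?_
    refine Filter.Eventually.of_forall fun ω => ?_
    rw [Real.norm_eq_abs, abs_le]
    obtain ⟨h0, h1⟩ := hr_bdd t ω
    constructor <;> linarith
  have hsum_int : ∀ a b : ℕ, Integrable (fun ω => ∑ s ∈ Finset.Ico a b, (r s ω - f)) μ :=
    fun a b => integrable_finset_sum _ fun s _ => (hrint s).sub (integrable_const f)
  -- the compensator process
  set Z : ℕ → ℕ → Ω → ℝ :=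
    fun a b => μ[fun ω => ∑ s ∈ Finset.Ico a b, (r s ω - f)|F (a - 1)] with hZ
  have hZ_empty : ∀ a b, b ≤ a → Z a b = 0 := by
    intro a b hba
    have h0 : (fun ω => ∑ s ∈ Finset.Ico a b, (r s ω - f)) = (0 : Ω → ℝ) := by
      funext ω
      rw [Finset.Ico_eq_empty (by omega), Finset.sum_empty]
      rfl
    rw [hZ]
    simp only [h0]
    exact condExp_zero
  have hZ_bdd : ∀ a b, 1 ≤ a → ∀ᵐ ω ∂μ, |Z a b ω| ≤ Γ := by
    intro a b ha
    by_cases hab : a < b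
    · have h := hmix a (b - 1) ha (by omega)
      have hIcc : Finset.Icc a (b - 1) = Finset.Ico a b := by
        rw [← Finset.Ico_add_one_right_eq_Icc]
        congr 1
        omega
      rw [hIcc] at h
      exact h
    · rw [hZ_empty a b (by omega)]
      refine Filter.Eventually.of_forall fun ω => ?_
      simp [hΓ]
  -- the martingale differences
  set X : ℕ → Ω → ℝ :=
    fun t ω => (r t ω - f) + Z (t + 1) (endOf t) ω - Z t (endOf t) ω with hX
  set D : ℕ → Ω → ℝ := fun t => if t ∈ allT then X t else 0 with hD
  set cc : ℕ → ℝ := fun t => if t ∈ allT then c else 0 with hcc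
  have hccnn : ∀ t, 0 ≤ cc t := by
    intro t
    by_cases h : t ∈ allT
    · simp [hcc, h, hcpos.le]
    · simp [hcc, h]
  have hmemT : ∀ t ∈ allT, 1 ≤ t ∧ t < endOf t := by
    intro t ht
    rw [hallT, Finset.mem_biUnion] at ht
    obtain ⟨k, hk, htk'⟩ := ht
    have he := hend k hk t htk'
    rw [hep, Finset.mem_Ico] at htk'
    have := htk k
    omega
  -- decomposition of Z t e
  have hZsplit : ∀ t, 1 ≤ t → t < endOf t →
      Z t (endOf t) =ᵐ[μ]
        fun ω => ((μ[r t|F (t - 1)]) ω - f) + (μ[Z (t + 1) (endOf t)|F (t - 1)]) ω := by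
    intro t ht1 hte
    set e := endOf t with he
    have hsp : (fun ω => ∑ s ∈ Finset.Ico t e, (r s ω - f)) =
        fun ω => (r t ω - f) + ∑ s ∈ Finset.Ico (t + 1) e, (r s ω - f) :=
      funext fun ω => Finset.sum_eq_sum_Ico_succ_bot hte _
    have step1 : Z t e =ᵐ[μ]
        μ[fun ω => r t ω - f|F (t - 1)] + μ[fun ω => ∑ s ∈ Finset.Ico (t + 1) e,
          (r s ω - f)|F (t - 1)] := by
      rw [hZ]
      simp only [hsp]
      exact condExp_add ((hrint t).sub (integrable_const f)) (hsum_int _ _) (F (t - 1))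
    have step2 : μ[fun ω => r t ω - f|F (t - 1)] =ᵐ[μ]
        fun ω => (μ[r t|F (t - 1)]) ω - f := by
      have h1 := condExp_sub (μ := μ) (m := F (t - 1)) (hrint t) (integrable_const f)
      have h2 : μ[fun _ => f|F (t - 1)] = fun _ => f := condExp_const (F.le _) f
      filter_upwards [h1] with ω hω
      have : (fun ω => r t ω - f) = r t - fun _ => f := rfl
      rw [this, hω, Pi.sub_apply, h2]
    have step3 : μ[fun ω => ∑ s ∈ Finset.Ico (t + 1) e, (r s ω - f)|F (t - 1)] =ᵐ[μ]
        μ[Z (t + 1) e|F (t - 1)] := by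
      have : Z (t + 1) e = μ[fun ω => ∑ s ∈ Finset.Ico (t + 1) e, (r s ω - f)|F t] := by
        rw [hZ]
        norm_num
      rw [this]
      exact (condExp_condExp_of_le (F.mono (by omega)) (F.le t)).symm
    filter_upwards [step1, step2, step3] with ω h1 h2 h3
    rw [h1, Pi.add_apply, h2, h3]
  -- martingale difference property
  have hDcond : ∀ t, μ[D t|F (t - 1)] =ᵐ[μ] 0 := by
    intro t
    by_cases ht : t ∈ allT
    · obtain ⟨ht1, hte⟩ := hmemT t ht
      have hDX : D t = X t := by rw [hD]; simp [ht]
      rw [hDX]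
      set e := endOf t with he
      have hXeq : X t = ((fun ω => r t ω - f) + Z (t + 1) e) - Z t e := rfl
      rw [hXeq]
      have hABint : Integrable ((fun ω => r t ω - f) + Z (t + 1) e) μ :=
        ((hrint t).sub (integrable_const f)).add integrable_condExp
      have h1 : μ[((fun ω => r t ω - f) + Z (t + 1) e) - Z t e|F (t - 1)] =ᵐ[μ]
          μ[(fun ω => r t ω - f) + Z (t + 1) e|F (t - 1)] - μ[Z t e|F (t - 1)] :=
        condExp_sub hABint integrable_condExp (F (t - 1))
      have h2 : μ[(fun ω => r t ω - f) + Z (t + 1) e|F (t - 1)] =ᵐ[μ]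
          μ[fun ω => r t ω - f|F (t - 1)] + μ[Z (t + 1) e|F (t - 1)] :=
        condExp_add ((hrint t).sub (integrable_const f)) integrable_condExp (F (t - 1))
      have h3 : μ[Z t e|F (t - 1)] = Z t e :=
        condExp_of_stronglyMeasurable (F.le (t - 1)) stronglyMeasurable_condExp
          integrable_condExp
      have h4 := hZsplit t ht1 hte
      have h5 : μ[fun ω => r t ω - f|F (t - 1)] =ᵐ[μ]
          fun ω => (μ[r t|F (t - 1)]) ω - f := by
        have ha := condExp_sub (μ := μ) (m := F (t - 1)) (hrint t) (integrable_const f)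
        have hb : μ[fun _ => f|F (t - 1)] = fun _ => f := condExp_const (F.le _) f
        filter_upwards [ha] with ω hω
        have : (fun ω => r t ω - f) = r t - fun _ => f := rfl
        rw [this, hω, Pi.sub_apply, hb]
      filter_upwards [h1, h2, h4, h5] with ω hω1 hω2 hω4 hω5
      rw [Pi.zero_apply, hω1, Pi.sub_apply, hω2, h3, Pi.add_apply, hω5, hω4]
      ring
    · have hD0 : D t = 0 := by rw [hD]; simp [ht]
      rw [hD0]
      rw [condExp_zero]
  -- strong measurability
  have hD_SM : ∀ t, StronglyMeasurable[F t] (D t) := by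
    intro t
    by_cases ht : t ∈ allT
    · have hDX : D t = X t := by rw [hD]; simp [ht]
      rw [hDX, hX]
      have h1 : StronglyMeasurable[F t] (r t) := (hr_adapted t).stronglyMeasurable
      have h2 : StronglyMeasurable[F t] (Z (t + 1) (endOf t)) := by
        have : StronglyMeasurable[F ((t + 1) - 1)] (Z (t + 1) (endOf t)) :=
          stronglyMeasurable_condExp
        simpa using this
      have h3 : StronglyMeasurable[F t] (Z t (endOf t)) :=
        stronglyMeasurable_condExp.mono (F.mono (Nat.sub_le t 1))
      exact ((h1.sub stronglyMeasurable_const).add h2).sub h3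
    · have hD0 : D t = 0 := by rw [hD]; simp [ht]
      rw [hD0]
      exact stronglyMeasurable_const
  -- boundedness
  have hD_bdd : ∀ t, ∀ᵐ ω ∂μ, |D t ω| ≤ cc t := by
    intro t
    by_cases ht : t ∈ allT
    · obtain ⟨ht1, hte⟩ := hmemT t ht
      have hDX : D t = X t := by rw [hD]; simp [ht]
      have hcct : cc t = c := by rw [hcc]; simp [ht]
      rw [hDX, hcct]
      set e := endOf t with he
      have h1 : 0 ≤ᵐ[μ] μ[r t|F (t - 1)] :=
        condExp_nonneg (Filter.Eventually.of_forall fun ω => (hr_bdd t ω).1)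
      have h2 : μ[r t|F (t - 1)] ≤ᵐ[μ] fun _ => 1 := by
        have := condExp_mono (μ := μ) (m := F (t - 1)) (hrint t) (integrable_const 1)
          (Filter.Eventually.of_forall fun ω => (hr_bdd t ω).2)
        rwa [condExp_const (F.le _)] at this
      have h3 : ∀ᵐ ω ∂μ, |Z (t + 1) e ω| ≤ Γ := hZ_bdd (t + 1) e (by omega)
      have h4a : μ[Z (t + 1) e|F (t - 1)] ≤ᵐ[μ] fun _ => Γ := by
        have := condExp_mono (μ := μ) (m := F (t - 1)) integrable_condExp
          (integrable_const Γ)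
          (h3.mono fun ω hω => (abs_le.1 hω).2)
        rwa [condExp_const (F.le _)] at this
      have h4b : (fun _ => -Γ) ≤ᵐ[μ] μ[Z (t + 1) e|F (t - 1)] := by
        have := condExp_mono (μ := μ) (m := F (t - 1)) (integrable_const (-Γ))
          integrable_condExp
          (h3.mono fun ω hω => (abs_le.1 hω).1)
        rwa [condExp_const (F.le _)] at this
      have h5 := hZsplit t ht1 hte
      filter_upwards [h1, h2, h3, h4a, h4b, h5] with ω hω1 hω2 hω3 hω4a hω4b hω5
      rw [hX]
      simp only [← he]
      rw [hω5]
      obtain ⟨hr0, hr1⟩ := hr_bdd t ω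
      obtain ⟨hz1, hz2⟩ := abs_le.1 hω3
      rw [abs_le, hc_def]
      constructor <;> simp only [Pi.zero_apply] at hω1 <;> nlinarith [hω1, hω2, hω4a, hω4b]
    · have hD0 : D t = 0 := by rw [hD]; simp [ht]
      have hcct : cc t = 0 := by rw [hcc]; simp [ht]
      rw [hD0, hcct]
      refine Filter.Eventually.of_forall fun ω => ?_
      simp
  -- apply the martingale mgf bound
  set N0 := tk K + L K with hN0
  have hsub : allT ⊆ Finset.range N0 := by
    intro t ht
    rw [hallT, Finset.mem_biUnion] at ht
    obtain ⟨k, hk, htk'⟩ := ht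
    rw [hep, Finset.mem_Ico] at htk'
    rw [Finset.mem_range, hN0]
    rw [Finset.mem_Icc] at hk
    rcases eq_or_lt_of_le hk.2 with h | h
    · subst h; omega
    · have := hmono k K h; omega
  have hsumc : ∑ t ∈ Finset.range N0, cc t ^ 2 = (T : ℝ) * c ^ 2 := by
    have h1 : ∑ t ∈ Finset.range N0, cc t ^ 2 = ∑ t ∈ allT, cc t ^ 2 :=
      (Finset.sum_subset hsub fun t _ ht => by simp [hcc, ht]).symm
    have h2 : ∀ t ∈ allT, cc t ^ 2 = c ^ 2 := fun t ht => by simp [hcc, ht]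
    rw [h1, Finset.sum_congr rfl h2, Finset.sum_const, hcard, nsmul_eq_mul]
  set M : Ω → ℝ := fun ω => ∑ t ∈ Finset.range N0, D t ω with hM
  have hmgfM : ∀ l : ℝ, ∫ ω, Real.exp (l * M ω) ∂μ ≤ Real.exp (l ^ 2 * ((T : ℝ) * c ^ 2) / 2) := by
    intro l
    have h := aux_mgf_sum F D cc hccnn hD_SM hD_bdd hDcond l N0
    rwa [hsumc] at h
  -- pointwise identity for M
  have hM_eq : ∀ ω, M ω = (∑ k ∈ Finset.Icc 1 K, ∑ t ∈ ep k, (r t ω - f))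
      - ∑ k ∈ Finset.Icc 1 K, Z (tk k) (tk k + L k) ω := by
    intro ω
    have e1 : M ω = ∑ t ∈ allT, X t ω := by
      have h0 : ∑ t ∈ allT, D t ω = ∑ t ∈ Finset.range N0, D t ω :=
        Finset.sum_subset hsub (fun t _ htn => by simp [hD, htn])
      simp only [hM]
      rw [← h0]
      exact Finset.sum_congr rfl fun t ht => by simp [hD, ht]
    have e2 : ∑ t ∈ allT, X t ω = ∑ k ∈ Finset.Icc 1 K, ∑ t ∈ ep k, X t ω := by
      rw [hallT]
      exact Finset.sum_biUnion fun k _ j _ hkj => hdisj k j hkj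
    have e3 : ∀ k ∈ Finset.Icc 1 K, ∑ t ∈ ep k, X t ω =
        (∑ t ∈ ep k, (r t ω - f)) - Z (tk k) (tk k + L k) ω := by
      intro k hk
      have hsame : ∀ t ∈ ep k, endOf t = tk k + L k := hend k hk
      have hstep : ∑ t ∈ ep k, X t ω =
          ∑ t ∈ ep k, ((r t ω - f) + (Z (t + 1) (tk k + L k) ω - Z t (tk k + L k) ω)) :=
        Finset.sum_congr rfl fun t ht => by rw [hX]; simp only [hsame t ht]; ring
      rw [hstep, Finset.sum_add_distrib]
      have htel : ∑ t ∈ ep k, (Z (t + 1) (tk k + L k) ω - Z t (tk k + L k) ω) =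
          Z (tk k + L k) (tk k + L k) ω - Z (tk k) (tk k + L k) ω := by
        rw [hep]
        rw [Finset.sum_Ico_eq_sum_range]
        have h := Finset.sum_range_sub (fun i => Z (tk k + i) (tk k + L k) ω)
          (tk k + L k - tk k)
        simp only [add_assoc]
        rw [h, add_zero]
        congr 2
        omega
      rw [htel, hZ_empty (tk k + L k) (tk k + L k) le_rfl]
      simp only [Pi.zero_apply]
      ring
    rw [e1, e2, Finset.sum_congr rfl e3, Finset.sum_sub_distrib]
  -- compensator bound
  have hcomp : ∀ᵐ ω ∂μ, |∑ k ∈ Finset.Icc 1 K, Z (tk k) (tk k + L k) ω| ≤ (K : ℝ) * Γ := by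
    have hall : ∀ᵐ ω ∂μ, ∀ k ∈ Finset.Icc 1 K, |Z (tk k) (tk k + L k) ω| ≤ Γ :=
      (ae_ball_iff (Finset.Icc 1 K).countable_toSet).2 fun k _ => hZ_bdd _ _ (htk k)
    filter_upwards [hall] with ω hω
    calc |∑ k ∈ Finset.Icc 1 K, Z (tk k) (tk k + L k) ω|
        ≤ ∑ k ∈ Finset.Icc 1 K, |Z (tk k) (tk k + L k) ω| := Finset.abs_sum_le_sum_abs _ _
      _ ≤ ∑ k ∈ Finset.Icc 1 K, Γ := Finset.sum_le_sum fun k hk => hω k hk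
      _ = (K : ℝ) * Γ := by rw [Finset.sum_const, Nat.card_Icc, nsmul_eq_mul]; norm_num
  -- sum of rewards minus mean
  have hrf : ∀ ω, ∑ k ∈ Finset.Icc 1 K, ∑ t ∈ ep k, (r t ω - f) =
      (∑ k ∈ Finset.Icc 1 K, ∑ t ∈ ep k, r t ω) - (T : ℝ) * f := by
    intro ω
    have hinner : ∀ k ∈ Finset.Icc 1 K, ∑ t ∈ ep k, (r t ω - f) =
        (∑ t ∈ ep k, r t ω) - (L k : ℝ) * f := by
      intro k _
      simp only [hep]
      rw [Finset.sum_sub_distrib, Finset.sum_const, Nat.card_Ico, nsmul_eq_mul]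
      have h : tk k + L k - tk k = L k := by omega
      rw [h]
    rw [Finset.sum_congr rfl hinner, Finset.sum_sub_distrib, ← Finset.sum_mul]
    congr 1
    rw [hT, Nat.cast_sum]
  have hM_near : ∀ᵐ ω ∂μ,
      |M ω - ((∑ k ∈ Finset.Icc 1 K, ∑ t ∈ ep k, r t ω) - (T : ℝ) * f)| ≤ (K : ℝ) * Γ := by
    filter_upwards [hcomp] with ω hω
    have heq : M ω - ((∑ k ∈ Finset.Icc 1 K, ∑ t ∈ ep k, r t ω) - (T : ℝ) * f) =
        -(∑ k ∈ Finset.Icc 1 K, Z (tk k) (tk k + L k) ω) := by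
      rw [hM_eq ω, hrf ω]; ring
    rw [heq, abs_neg]
    exact hω
  -- Chernoff
  have hv : (0 : ℝ) < (T : ℝ) * c ^ 2 := by positivity
  have hlg : 0 < Real.log (2 / δ) := Real.log_pos (by rw [lt_div_iff₀ hδ0]; linarith)
  set ε := c * Real.sqrt (2 * (T : ℝ) * Real.log (2 / δ)) with hεdef
  have hε : 0 < ε := mul_pos hcpos (Real.sqrt_pos.2 (by positivity))
  have hMint : ∀ l : ℝ, Integrable (fun ω => Real.exp (l * M ω)) μ := by
    intro l
    have hSMM : StronglyMeasurable M :=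
      Finset.stronglyMeasurable_fun_sum _ fun t _ => (hD_SM t).mono (F.le t)
    have hbd : ∀ᵐ ω ∂μ, |M ω| ≤ ∑ t ∈ Finset.range N0, cc t := by
      filter_upwards [ae_all_iff.2 hD_bdd] with ω hω
      exact (Finset.abs_sum_le_sum_abs _ _).trans (Finset.sum_le_sum fun t _ => hω t)
    refine Integrable.mono' (integrable_const (Real.exp (|l| * ∑ t ∈ Finset.range N0, cc t)))
      ((Real.continuous_exp.comp (continuous_const.mul continuous_id)).comp_stronglyMeasurable
        hSMM).aestronglyMeasurable ?_
    filter_upwards [hbd] with ω hω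
    rw [Real.norm_eq_abs, abs_of_pos (Real.exp_pos _), Real.exp_le_exp]
    calc l * M ω ≤ |l * M ω| := le_abs_self _
      _ = |l| * |M ω| := abs_mul _ _
      _ ≤ |l| * ∑ t ∈ Finset.range N0, cc t := mul_le_mul_of_nonneg_left hω (abs_nonneg l)
  have hchern := aux_chernoff M ((T : ℝ) * c ^ 2) ε hv hε hMint hmgfM
  have hhalf : Real.exp (-(ε ^ 2) / (2 * ((T : ℝ) * c ^ 2))) = δ / 2 := by
    have h1 : -(ε ^ 2) / (2 * ((T : ℝ) * c ^ 2)) = -Real.log (2 / δ) := by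
      rw [hεdef, mul_pow, Real.sq_sqrt (by positivity)]
      field_simp
    rw [h1, Real.exp_neg, Real.exp_log (by positivity), inv_div]
  have hup : μ {ω | ε ≤ M ω} ≤ ENNReal.ofReal (δ / 2) := by
    rw [← ENNReal.ofReal_toReal (measure_ne_top μ {ω | ε ≤ M ω})]
    exact ENNReal.ofReal_le_ofReal (hchern.1.trans hhalf.le)
  have hdown : μ {ω | M ω ≤ -ε} ≤ ENNReal.ofReal (δ / 2) := by
    rw [← ENNReal.ofReal_toReal (measure_ne_top μ {ω | M ω ≤ -ε})]
    exact ENNReal.ofReal_le_ofReal (hchern.2.trans hhalf.le)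
  -- final assembly
  set Gs : Set Ω := {ω | |(1 / (T : ℝ)) * ∑ k ∈ Finset.Icc 1 K,
      ∑ t ∈ ep k, r t ω - f| ≤ c * Real.sqrt (2 * Real.log (2 / δ) / (T : ℝ)) +
      (K : ℝ) * Γ / (T : ℝ)} with hGs
  have hGmeas : MeasurableSet Gs := by
    rw [hGs]
    refine measurableSet_le (Measurable.abs (Measurable.sub ?_ measurable_const))
      measurable_const
    exact (Finset.measurable_sum _ fun k _ => Finset.measurable_sum _ fun t _ =>
      ((hr_adapted t).mono (F.le t) le_rfl)).const_mul _
  have hsqrtT : Real.sqrt (2 * Real.log (2 / δ) / (T : ℝ)) * (T : ℝ) =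
      Real.sqrt (2 * (T : ℝ) * Real.log (2 / δ)) := by
    rw [show (2 * (T : ℝ) * Real.log (2 / δ)) =
        (2 * Real.log (2 / δ) / (T : ℝ)) * (T : ℝ) ^ 2 by field_simp]
    rw [Real.sqrt_mul (by positivity) ((T : ℝ) ^ 2), Real.sqrt_sq hTpos.le]
  have hsubB : Gsᶜ ≤ᵐ[μ] ({ω | ε ≤ M ω} ∪ {ω | M ω ≤ -ε} : Set Ω) := by
    filter_upwards [hM_near] with ω hω
    intro hmem
    by_contra hB
    have hB' : ¬(ε ≤ M ω ∨ M ω ≤ -ε) := hB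
    push_neg at hB'
    obtain ⟨hB1, hB2⟩ := hB'
    apply hmem
    show ω ∈ Gs
    rw [hGs]
    simp only [Set.mem_setOf_eq]
    have e1 : (1 / (T : ℝ)) * (∑ k ∈ Finset.Icc 1 K, ∑ t ∈ ep k, r t ω) - f =
        ((∑ k ∈ Finset.Icc 1 K, ∑ t ∈ ep k, r t ω) - (T : ℝ) * f) / (T : ℝ) := by
      field_simp
    rw [e1, abs_div, abs_of_pos hTpos, div_le_iff₀ hTpos]
    have e2 : (c * Real.sqrt (2 * Real.log (2 / δ) / (T : ℝ)) +
        (K : ℝ) * Γ / (T : ℝ)) * (T : ℝ) = ε + (K : ℝ) * Γ := by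
      rw [add_mul, div_mul_cancel₀ _ hTpos.ne', hεdef, mul_assoc, hsqrtT]
    rw [e2]
    rw [abs_le] at hω ⊢
    constructor <;> [linarith [hω.1, hω.2]; linarith [hω.1, hω.2]]
  have hGcompl : μ Gsᶜ ≤ ENNReal.ofReal δ := by
    calc μ Gsᶜ ≤ μ ({ω | ε ≤ M ω} ∪ {ω | M ω ≤ -ε}) := measure_mono_ae hsubB
      _ ≤ μ {ω | ε ≤ M ω} + μ {ω | M ω ≤ -ε} := measure_union_le _ _
      _ ≤ ENNReal.ofReal (δ / 2) + ENNReal.ofReal (δ / 2) := add_le_add hup hdown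
      _ = ENNReal.ofReal δ := by
          rw [← ENNReal.ofReal_add (by linarith) (by linarith)]
          norm_num
  calc 1 - ENNReal.ofReal δ ≤ 1 - μ Gsᶜ := tsub_le_tsub_left hGcompl 1
    _ = μ Gs := by rw [← prob_compl_eq_one_sub hGmeas.compl, compl_compl]
end
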